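/- Let (g,[·,...,·],α) be an n-ary multiplicative Hom-Nambu-Lie superalgebra and X = x₁∧...∧x_{n-1} ∈ g^{∧(n-1)} with α(xᵢ) = xᵢ for all i. Then for each k ≥ 0 the map ad_k(X) : g → g defined by ad_k(X)(y) = [x₁,...,x_{n-1},α^k(y)] is an α^{k+1}-derivation of g. -/

import Mathlib

open Finset

/-- An `(m+1)`-ary multiplicative Hom-Nambu-Lie superalgebra structure on a `K`-vector space
`V` with `ℤ/2`-grading `gr`, `(m+1)`-linear bracket `br` and twist map `α`. -/
structure IsHNLS (K : Type*) {V : Type*} [Field K] [AddCommGroup V] [Module K V]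
    (m : ℕ) (gr : ZMod 2 → Submodule K V)
    (br : MultilinearMap K (fun _ : Fin (m + 1) => V) V)
    (α : V →ₗ[K] V) : Prop where
  even_alpha : ∀ (d : ZMod 2), ∀ v ∈ gr d, α v ∈ gr d
  even_br : ∀ (d : Fin (m + 1) → ZMod 2) (x : Fin (m + 1) → V),
      (∀ i, x i ∈ gr (d i)) → br x ∈ gr (∑ i, d i)
  skew : ∀ (d : Fin (m + 1) → ZMod 2) (x : Fin (m + 1) → V),
      (∀ i, x i ∈ gr (d i)) → ∀ i j : Fin (m + 1), (i : ℕ) + 1 = (j : ℕ) →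
      br x = -((-1 : K) ^ (d i * d j).val) • br (x ∘ Equiv.swap i j)
  mult : ∀ x : Fin (m + 1) → V, α (br x) = br fun i => α (x i)
  jacobi : ∀ (dx : Fin m → ZMod 2) (dy : Fin (m + 1) → ZMod 2)
      (x : Fin m → V) (y : Fin (m + 1) → V),
      (∀ i, x i ∈ gr (dx i)) → (∀ i, y i ∈ gr (dy i)) →
      br (Fin.snoc (fun i => α (x i)) (br y)) =
        ∑ i : Fin (m + 1),
          ((-1 : K) ^ (((∑ j, dx j) * ∑ j ∈ univ.filter (fun j => j < i), dy j).val)) •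
            br (Function.update (fun j => α (y j)) i (br (Fin.snoc x (y i))))

/-- `D` is an `α^k`-derivation of homogeneous degree `dD` of the `(m+1)`-ary multiplicative
Hom-Nambu-Lie superalgebra `(V, gr, br, α)`. -/
def IsAlphaDer {K V : Type*} [Field K] [AddCommGroup V] [Module K V] (m : ℕ)
    (gr : ZMod 2 → Submodule K V)
    (br : MultilinearMap K (fun _ : Fin (m + 1) => V) V)
    (α : V →ₗ[K] V) (k : ℕ) (dD : ZMod 2) (D : V → V) : Prop :=
  IsLinearMap K D ∧ (∀ v, D (α v) = α (D v)) ∧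
    (∀ (d : ZMod 2), ∀ v ∈ gr d, D v ∈ gr (dD + d)) ∧
    ∀ (d : Fin (m + 1) → ZMod 2) (x : Fin (m + 1) → V), (∀ i, x i ∈ gr (d i)) →
      D (br x) = ∑ i : Fin (m + 1),
        ((-1 : K) ^ ((dD * ∑ j ∈ univ.filter (fun j => j < i), d j).val)) •
          br (Function.update (fun j => (α ^ k) (x j)) i (D (x i)))

/-- Lemma 2.2: for `X = x₁∧…∧x_m` with `α(xᵢ) = xᵢ`, the map
`ad_k(X)(y) = [x₁,…,x_m, α^k(y)]` is an `α^{k+1}`-derivation of degree `|x₁|+…+|x_m|`. -/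
theorem ad_is_alpha_der {K V : Type*} [Field K] [AddCommGroup V] [Module K V] (m : ℕ)
    (gr : ZMod 2 → Submodule K V)
    (br : MultilinearMap K (fun _ : Fin (m + 1) => V) V)
    (α : V →ₗ[K] V) (h : IsHNLS K m gr br α) (k : ℕ)
    (dx : Fin m → ZMod 2) (x : Fin m → V)
    (hx : ∀ i, x i ∈ gr (dx i)) (hfix : ∀ i, α (x i) = x i) :
    IsAlphaDer m gr br α (k + 1) (∑ i, dx i)
      (fun v => br (Fin.snoc x ((α ^ k) v))) := by
  have hmult : ∀ (n : ℕ) (z : Fin (m + 1) → V),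
      (α ^ n) (br z) = br (fun i => (α ^ n) (z i)) := by
    intro n
    induction n with
    | zero => intro z; simp
    | succ n ih =>
      intro z
      simp only [pow_succ', Module.End.mul_apply, ih, h.mult]
  have hgr : ∀ (n : ℕ) (d : ZMod 2) (v : V), v ∈ gr d → (α ^ n) v ∈ gr d := by
    intro n
    induction n with
    | zero => intro d v hv; simpa using hv
    | succ n ih =>
      intro d v hv
      simp only [pow_succ', Module.End.mul_apply]
      exact h.even_alpha d _ (ih d v hv)
  have key : ∀ w : V, br (Fin.snoc x w) =
      br (Function.update (Fin.snoc x 0) (Fin.last m) w) := by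
    intro w; rw [Fin.update_snoc_last]
  refine ⟨?_, ?_, ?_, ?_⟩
  · constructor
    · intro a b
      simp only [map_add, key]
      exact br.map_update_add _ _ _ _
    · intro c a
      simp only [map_smul, key]
      exact br.map_update_smul _ _ _ _
  · intro v
    simp only [h.mult]
    congr 1
    funext i
    refine Fin.lastCases ?_ ?_ i
    · simp only [Fin.snoc_last]
      rw [← Module.End.mul_apply, ← pow_succ, pow_succ', Module.End.mul_apply]
    · intro j
      simp [Fin.snoc_castSucc, hfix]
  · intro d v hv
    have := h.even_br (Fin.snoc dx d) (Fin.snoc x ((α ^ k) v)) ?_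
    · convert this using 2
      rw [Fin.sum_univ_castSucc]
      simp
    · intro i
      refine Fin.lastCases ?_ ?_ i
      · simp only [Fin.snoc_last]
        exact hgr k d v hv
      · intro j
        simpa using hx j
  · intro d z hz
    show br (Fin.snoc x ((α ^ k) (br z))) = _
    rw [hmult k z]
    conv_lhs => rw [show x = (fun i => α (x i)) from (funext hfix).symm]
    rw [h.jacobi dx d x (fun i => (α ^ k) (z i)) hx (fun i => hgr k (d i) (z i) (hz i))]
    have heq : (fun j => α ((α ^ k) (z j))) = fun j => (α ^ (k + 1)) (z j) := by
      funext j; rw [pow_succ', Module.End.mul_apply]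
    rw [heq]
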